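/- Under conditions (H1) and (H2), there exist real numbers 0 < r < R and a continuous nonnegative function u* : [0,1] → ℝ such that u*(t) = ∫₀¹ k(t,s) f(u*(s)) ds for all t ∈ [0,1], and (r/‖φ₁‖_∞)·(Lφ₁)(t) ≤ u*(t) ≤ R·(L1)(t) for all t ∈ [0,1], where L1 denotes L applied to the constant function 1 and r satisfies f(t) ≥ t/λ₁ for all t ∈ [0, λ₁r], while R satisfies f(t) ≤ t/‖L1‖_∞ for all t ≥ ‖L1‖_∞·R. -/

import Mathlib

open MeasureTheory

set_option maxHeartbeats 2000000 in
/-- Under conditions (H1) and (H2), the Hammerstein integral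
equation `u(t) = ∫₀¹ k(t,s) f(u(s)) ds` has a nonnegative continuous solution
`u*` with `(r/‖φ₁‖)·(Lφ₁)(t) ≤ u*(t) ≤ R·(L1)(t)` on `[0,1]`, where `0 < r < R`,
`f(t) ≥ t/λ₁` on `[0, λ₁ r]` and `f(t) ≤ t/‖L1‖` for `t ≥ ‖L1‖·R`. -/
theorem hammerstein_positive_solution
    (k : unitInterval → unitInterval → ℝ)
    (hkcont : Continuous (Function.uncurry k))
    (hknonneg : ∀ t s, 0 ≤ k t s)
    (hksymm : ∀ t s, k t s = k s t)
    (L : C(unitInterval, ℝ) →L[ℝ] C(unitInterval, ℝ))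
    (hL : ∀ (u : C(unitInterval, ℝ)) (t : unitInterval), L u t = ∫ s, k t s * u s)
    -- (H1)
    (θ : C(unitInterval, ℝ)) (hθnonneg : ∀ t, 0 ≤ θ t)
    (hH1 : ∀ t s q, θ t * k q s ≤ k t s)
    (hLθpos : 0 < ‖L θ‖)
    -- the positive eigenvalue with nonnegative eigenfunction given by (H1)
    (lam₁ : ℝ) (hlam₁ : 0 < lam₁)
    (φ₁ : C(unitInterval, ℝ)) (hφ₁nonneg : ∀ t, 0 ≤ φ₁ t) (hφ₁ne : φ₁ ≠ 0)
    (heig : L φ₁ = lam₁ • φ₁)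
    -- the nonlinearity f
    (f : ℝ → ℝ) (hfcont : Continuous f) (hfnonneg : ∀ t, 0 ≤ f t)
    (hfmono : MonotoneOn f (Set.Ici (0 : ℝ)))
    -- (H2)
    (l₀ : ℝ) (hl₀ : Filter.Tendsto (fun t => f t / t) (nhdsWithin 0 (Set.Ioi 0)) (nhds l₀))
    (hl₀gt : 1 / lam₁ < l₀)
    (linf : ℝ) (hlinf : Filter.Tendsto (fun t => f t / t) Filter.atTop (nhds linf))
    (hlinflt : linf < 1 / ‖L (1 : C(unitInterval, ℝ))‖) :
    ∃ r R : ℝ, 0 < r ∧ r < R ∧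
      (∀ t ∈ Set.Icc (0 : ℝ) (lam₁ * r), t / lam₁ ≤ f t) ∧
      (∀ t : ℝ, ‖L (1 : C(unitInterval, ℝ))‖ * R ≤ t → f t ≤ t / ‖L (1 : C(unitInterval, ℝ))‖) ∧
      ∃ u : C(unitInterval, ℝ),
        (∀ t, 0 ≤ u t) ∧
        (∀ t, u t = ∫ s, k t s * f (u s)) ∧
        (∀ t, (r / ‖φ₁‖) * L φ₁ t ≤ u t ∧ u t ≤ R * L (1 : C(unitInterval, ℝ)) t) := by
  classical
  set one : C(unitInterval, ℝ) := 1 with hone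
  set N : ℝ := ‖L one‖ with hN
  -- basic integrability
  have hint : ∀ g : unitInterval → ℝ, Continuous g → Integrable g := by
    intro g hg
    have h1 : IntegrableOn g Set.univ volume := hg.continuousOn.integrableOn_compact isCompact_univ
    rwa [integrableOn_univ] at h1
  -- pointwise formula for L1
  have hL1 : ∀ t, L one t = ∫ s, k t s := by
    intro t
    rw [hL]
    simp [hone]
  have hL1nonneg : ∀ t, 0 ≤ L one t := by
    intro t
    rw [hL1]
    exact integral_nonneg fun s => hknonneg t s
  have hL1le : ∀ t, L one t ≤ N :=
    fun t => le_trans (le_abs_self _) ((L one).norm_coe_le_norm t)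
  -- linf ≥ 0 and N > 0
  have hlinf0 : 0 ≤ linf := by
    refine ge_of_tendsto hlinf ?_
    filter_upwards [Filter.eventually_ge_atTop (1 : ℝ)] with t ht
    exact div_nonneg (hfnonneg t) (by linarith)
  have hNpos : 0 < N := by
    rcases (norm_nonneg (L one)).lt_or_eq with h | h
    · exact h
    · exfalso
      have hN0 : N = 0 := by rw [hN, ← h]
      rw [hN0] at hlinflt
      simp at hlinflt
      linarith
  -- construct r from the limit at 0
  have h1 : ∀ᶠ t in nhdsWithin 0 (Set.Ioi 0), 1 / lam₁ < f t / t :=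
    hl₀.eventually (eventually_gt_nhds hl₀gt)
  rw [Filter.eventually_iff, Metric.mem_nhdsWithin_iff] at h1
  obtain ⟨δ, hδpos, hδ⟩ := h1
  set r : ℝ := δ / (2 * lam₁) with hr
  have hrpos : 0 < r := by positivity
  have hlamr : lam₁ * r = δ / 2 := by
    rw [hr]; field_simp
  have prop3 : ∀ t ∈ Set.Icc (0 : ℝ) (lam₁ * r), t / lam₁ ≤ f t := by
    intro t ht
    rcases eq_or_lt_of_le ht.1 with h0 | h0
    · rw [← h0]
      simpa using hfnonneg 0
    · have htδ : dist t (0 : ℝ) < δ := by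
        rw [Real.dist_eq, sub_zero, abs_of_pos h0]
        have := ht.2
        rw [hlamr] at this
        linarith
      have := hδ ⟨Metric.mem_ball.2 htδ, h0⟩
      have h2 : 1 / lam₁ * t < f t := (lt_div_iff₀ h0).1 this
      calc t / lam₁ = 1 / lam₁ * t := by ring
        _ ≤ f t := le_of_lt h2
  -- construct R from the limit at infinity
  set c' : ℝ := (linf + 1 / N) / 2 with hc'
  have hc'1 : linf < c' := by
    rw [hc']
    linarith [one_div_pos.2 hNpos]
  have hc'2 : c' < 1 / N := by
    rw [hc']
    linarith [one_div_pos.2 hNpos]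
  have hc'pos : 0 < c' := by
    rw [hc']
    have := one_div_pos.2 hNpos
    linarith
  have h2 : ∀ᶠ t in Filter.atTop, f t / t < c' :=
    hlinf.eventually (eventually_lt_nhds hc'1)
  rw [Filter.eventually_atTop] at h2
  obtain ⟨M₀, hM₀⟩ := h2
  set M : ℝ := max M₀ 1 with hM
  have hM1 : (1 : ℝ) ≤ M := le_max_right _ _
  have hfM : ∀ t, M ≤ t → f t ≤ c' * t := by
    intro t ht
    have htpos : 0 < t := lt_of_lt_of_le (by linarith) ht
    have := hM₀ t (le_trans (le_max_left _ _) ht)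
    have := (div_lt_iff₀ htpos).1 this
    linarith
  -- C : max of f on [0, M]
  obtain ⟨x₀, hx₀mem, hx₀⟩ := isCompact_Icc.exists_isMaxOn
    (Set.nonempty_Icc.2 (by linarith : (0:ℝ) ≤ M)) hfcont.continuousOn
  set C : ℝ := f x₀ with hC
  have hCnonneg : 0 ≤ C := hfnonneg _
  have hfC : ∀ t, 0 ≤ t → f t ≤ c' * t + C := by
    intro t ht
    rcases le_or_gt t M with h | h
    · have h' : f t ≤ C := hx₀ ⟨ht, h⟩
      nlinarith
    · have := hfM t (le_of_lt h)
      linarith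
  -- the constant R
  set d : ℝ := 1 - c' * N with hd
  have hdpos : 0 < d := by
    rw [hd]
    have := (lt_div_iff₀ hNpos).1 hc'2
    nlinarith
  set R : ℝ := max (max (2 * r + 1) (M / N)) (C / d + 1) with hR
  have hRr : r < R := by
    have : 2 * r + 1 ≤ R := le_trans (le_max_left _ _) (le_max_left _ _)
    linarith
  have hRpos : 0 < R := lt_trans hrpos hRr
  have hRM : M ≤ N * R := by
    have h3 : M / N ≤ R := le_trans (le_max_right _ _) (le_max_left _ _)
    calc M = N * (M / N) := by field_simp
      _ ≤ N * R := by nlinarith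
  have hRd : c' * N * R + C ≤ R := by
    have h3 : C / d + 1 ≤ R := le_max_right _ _
    have h4 : C / d ≤ R - 1 := by linarith
    have h5 : C ≤ (R - 1) * d := (div_le_iff₀ hdpos).1 h4
    nlinarith
  have prop4 : ∀ t : ℝ, N * R ≤ t → f t ≤ t / N := by
    intro t ht
    have htM : M ≤ t := le_trans hRM ht
    have htpos : 0 ≤ t := le_trans (by nlinarith) ht
    have h5 := hfM t htM
    have h6 : c' * t ≤ (1 / N) * t := mul_le_mul_of_nonneg_right (le_of_lt hc'2) htpos
    calc f t ≤ c' * t := h5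
      _ ≤ (1 / N) * t := h6
      _ = t / N := by ring
  -- norm facts
  have hφ₁pos : 0 < ‖φ₁‖ := norm_pos_iff.2 hφ₁ne
  have hφ₁le : ∀ s, φ₁ s ≤ ‖φ₁‖ := fun s => le_trans (le_abs_self _) (φ₁.norm_coe_le_norm s)
  set kC : C(unitInterval × unitInterval, ℝ) := ⟨Function.uncurry k, hkcont⟩ with hkC
  set kmax : ℝ := ‖kC‖ with hkmax
  have hkle : ∀ t s, |k t s| ≤ kmax := fun t s => kC.norm_coe_le_norm (t, s)
  -- the iteration operator
  set u₀ : C(unitInterval, ℝ) := R • L one with hu₀def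
  have hu₀ : ∀ t, u₀ t = R * L one t := fun t => rfl
  have hu₀nonneg : ∀ t, 0 ≤ u₀ t := fun t => mul_nonneg (le_of_lt hRpos) (hL1nonneg t)
  have hu₀le : ∀ t, u₀ t ≤ R * N := fun t =>
    mul_le_mul_of_nonneg_left (hL1le t) (le_of_lt hRpos)
  set Bf : ℝ := c' * (R * N) + C with hBf
  have hBfnonneg : 0 ≤ Bf := by
    have : 0 ≤ c' * (R * N) := by positivity
    linarith
  have hfBf : ∀ x, 0 ≤ x → x ≤ R * N → f x ≤ Bf := by
    intro x hx1 hx2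
    have := hfC x hx1
    have : c' * x ≤ c' * (R * N) := mul_le_mul_of_nonneg_left hx2 (le_of_lt hc'pos)
    have := hfC x hx1
    rw [hBf]
    linarith [mul_le_mul_of_nonneg_left hx2 (le_of_lt hc'pos)]
  have hint2 : ∀ (t : unitInterval) (u : C(unitInterval, ℝ)),
      Integrable (fun s => k t s * f (u s)) := by
    intro t u
    exact hint _ (((hkcont.comp (Continuous.prodMk_right t))).mul (hfcont.comp u.continuous))
  have key_cont : ∀ u : C(unitInterval, ℝ), Continuous fun t => ∫ s, k t s * f (u s) := by
    intro u
    set fu : C(unitInterval, ℝ) := ⟨fun s => f (u s), hfcont.comp u.continuous⟩ with hfu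
    apply continuous_of_dominated (bound := fun _ => kmax * ‖fu‖)
    · intro t
      exact (((hkcont.comp (Continuous.prodMk_right t))).mul (hfcont.comp u.continuous)).aestronglyMeasurable
    · intro t
      filter_upwards with s
      rw [norm_mul]
      exact mul_le_mul (hkle t s) (fu.norm_coe_le_norm s) (norm_nonneg _)
        (le_trans (abs_nonneg _) (hkle t s))
    · exact integrable_const _
    · filter_upwards with s
      exact ((hkcont.comp (continuous_id.prodMk continuous_const)).mul continuous_const)
  set T : C(unitInterval, ℝ) → C(unitInterval, ℝ) :=
    fun u => ⟨fun t => ∫ s, k t s * f (u s), key_cont u⟩ with hT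
  have hTapp : ∀ (u : C(unitInterval, ℝ)) t, T u t = ∫ s, k t s * f (u s) := fun u t => rfl
  have hTnonneg : ∀ (u : C(unitInterval, ℝ)) t, 0 ≤ T u t := by
    intro u t
    rw [hTapp]
    exact integral_nonneg fun s => mul_nonneg (hknonneg t s) (hfnonneg _)
  have hTmono : ∀ u v : C(unitInterval, ℝ), (∀ s, 0 ≤ u s) → (∀ s, u s ≤ v s) →
      ∀ t, T u t ≤ T v t := by
    intro u v hu huv t
    rw [hTapp, hTapp]
    refine integral_mono (hint2 t u) (hint2 t v) fun s => ?_
    exact mul_le_mul_of_nonneg_left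
      (hfmono (Set.mem_Ici.2 (hu s)) (Set.mem_Ici.2 (le_trans (hu s) (huv s))) (huv s))
      (hknonneg t s)
  -- supersolution
  have hTu₀ : ∀ t, T u₀ t ≤ u₀ t := by
    intro t
    rw [hTapp]
    have hstep : ∀ s, k t s * f (u₀ s) ≤ k t s * Bf := by
      intro s
      exact mul_le_mul_of_nonneg_left (hfBf _ (hu₀nonneg s) (hu₀le s)) (hknonneg t s)
    calc (∫ s, k t s * f (u₀ s)) ≤ ∫ s, k t s * Bf :=
          integral_mono (hint2 t u₀)
            (hint _ ((hkcont.comp (Continuous.prodMk_right t)).mul continuous_const)) hstep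
      _ = (∫ s, k t s) * Bf := integral_mul_const _ _
      _ = Bf * L one t := by rw [hL1]; ring
      _ ≤ R * L one t := by
          have hBfR : Bf ≤ R := by rw [hBf]; nlinarith [hRd]
          exact mul_le_mul_of_nonneg_right hBfR (hL1nonneg t)
      _ = u₀ t := (hu₀ t).symm
  -- subsolution
  set w : C(unitInterval, ℝ) := (r / ‖φ₁‖) • L φ₁ with hwdef
  have hwt : ∀ t, w t = (r / ‖φ₁‖) * L φ₁ t := fun t => rfl
  have hws : ∀ s, w s = (r / ‖φ₁‖) * (lam₁ * φ₁ s) := by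
    intro s
    rw [hwt, heig]
    simp
  have hw_nonneg : ∀ s, 0 ≤ w s := by
    intro s
    rw [hws]
    have h3 : 0 ≤ r / ‖φ₁‖ := by positivity
    exact mul_nonneg h3 (mul_nonneg hlam₁.le (hφ₁nonneg s))
  have hw_ub : ∀ s, w s ≤ lam₁ * r := by
    intro s
    rw [hws]
    have h3 : (r / ‖φ₁‖) * (lam₁ * φ₁ s) ≤ (r / ‖φ₁‖) * (lam₁ * ‖φ₁‖) := by
      have h4 : (0:ℝ) ≤ r / ‖φ₁‖ := by positivity
      exact mul_le_mul_of_nonneg_left (mul_le_mul_of_nonneg_left (hφ₁le s) hlam₁.le) h4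
    calc (r / ‖φ₁‖) * (lam₁ * φ₁ s) ≤ (r / ‖φ₁‖) * (lam₁ * ‖φ₁‖) := h3
      _ = lam₁ * r := by field_simp
  have hTw : ∀ t, w t ≤ T w t := by
    intro t
    rw [hTapp]
    have hstep : ∀ s, k t s * (w s / lam₁) ≤ k t s * f (w s) := by
      intro s
      refine mul_le_mul_of_nonneg_left ?_ (hknonneg t s)
      exact prop3 (w s) ⟨hw_nonneg s, hw_ub s⟩
    have heq : (fun s => k t s * (w s / lam₁)) = fun s => (r / ‖φ₁‖) * (k t s * φ₁ s) := by
      funext s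
      rw [hws]
      field_simp
    have h4 : (∫ s, k t s * (w s / lam₁)) = w t := by
      rw [heq, integral_const_mul, ← hL, hwt]
    calc w t = ∫ s, k t s * (w s / lam₁) := h4.symm
      _ ≤ ∫ s, k t s * f (w s) := by
          refine integral_mono ?_ (hint2 t w) hstep
          rw [heq]
          exact (hint _ (((hkcont.comp (Continuous.prodMk_right t))).mul φ₁.continuous)).const_mul _
  have hw_le_u₀ : ∀ t, w t ≤ u₀ t := by
    intro t
    have h5 : L φ₁ t ≤ ‖φ₁‖ * L one t := by
      rw [hL, hL1]
      calc (∫ s, k t s * φ₁ s) ≤ ∫ s, k t s * ‖φ₁‖ := by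
            refine integral_mono (hint _ (((hkcont.comp (Continuous.prodMk_right t))).mul φ₁.continuous))
              (hint _ ((hkcont.comp (Continuous.prodMk_right t)).mul continuous_const)) fun s => ?_
            exact mul_le_mul_of_nonneg_left (hφ₁le s) (hknonneg t s)
        _ = (∫ s, k t s) * ‖φ₁‖ := integral_mul_const _ _
        _ = ‖φ₁‖ * ∫ s, k t s := by ring
    rw [hwt, hu₀]
    have h6 : (r / ‖φ₁‖) * L φ₁ t ≤ (r / ‖φ₁‖) * (‖φ₁‖ * L one t) := by
      have : 0 ≤ r / ‖φ₁‖ := by positivity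
      nlinarith
    calc (r / ‖φ₁‖) * L φ₁ t ≤ (r / ‖φ₁‖) * (‖φ₁‖ * L one t) := h6
      _ = r * L one t := by field_simp
      _ ≤ R * L one t := mul_le_mul_of_nonneg_right (le_of_lt hRr) (hL1nonneg t)
  -- the iteration
  set U : ℕ → C(unitInterval, ℝ) := fun n => T^[n] u₀ with hU
  have hU0 : U 0 = u₀ := rfl
  have hUsucc : ∀ n, U (n + 1) = T (U n) := fun n => Function.iterate_succ_apply' T n u₀
  have hmain : ∀ n, (∀ t, 0 ≤ U n t) ∧ (∀ t, w t ≤ U n t) ∧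
      (∀ t, U (n + 1) t ≤ U n t) ∧ (∀ t, U n t ≤ u₀ t) := by
    intro n
    induction n with
    | zero =>
      refine ⟨fun t => hu₀nonneg t, fun t => hw_le_u₀ t, fun t => ?_, fun t => le_refl _⟩
      rw [hUsucc 0, hU0]
      exact hTu₀ t
    | succ n ih =>
      obtain ⟨h0, h1', h2', h3'⟩ := ih
      have hn0 : ∀ t, 0 ≤ U (n + 1) t := by
        intro t; rw [hUsucc n]; exact hTnonneg (U n) t
      refine ⟨hn0, ?_, ?_, fun t => le_trans (h2' t) (h3' t)⟩
      · intro t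
        rw [hUsucc n]
        exact le_trans (hTw t) (hTmono w (U n) hw_nonneg h1' t)
      · intro t
        rw [hUsucc (n + 1)]
        calc T (U (n + 1)) t ≤ T (U n) t := hTmono (U (n + 1)) (U n) hn0 h2' t
          _ = U (n + 1) t := by rw [hUsucc n]
  have hanti : ∀ t, Antitone fun n => U n t :=
    fun t => antitone_nat_of_succ_le fun n => (hmain (n)).2.2.1 t
  have hbdd : ∀ t, BddBelow (Set.range fun n => U n t) := by
    intro t
    refine ⟨w t, ?_⟩
    rintro x ⟨n, rfl⟩
    exact (hmain n).2.1 t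
  set g : unitInterval → ℝ := fun t => ⨅ n, U n t with hg
  have hlim : ∀ t, Filter.Tendsto (fun n => U n t) Filter.atTop (nhds (g t)) :=
    fun t => tendsto_atTop_ciInf (hanti t) (hbdd t)
  have hg_lb : ∀ t, w t ≤ g t := fun t => le_ciInf fun n => (hmain n).2.1 t
  have hg_nonneg : ∀ t, 0 ≤ g t := fun t => le_ciInf fun n => (hmain n).1 t
  have hg_ub : ∀ t, g t ≤ u₀ t := fun t => ciInf_le (hbdd t) 0
  have hUle : ∀ n s, U n s ≤ R * N := fun n s => le_trans ((hmain n).2.2.2 s) (hu₀le s)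
  have hfUBf : ∀ n s, f (U n s) ≤ Bf := fun n s => hfBf _ ((hmain n).1 s) (hUle n s)
  -- equicontinuity
  set Kc : C(unitInterval, C(unitInterval, ℝ)) := kC.curry with hKc
  have hKcapp : ∀ t s, Kc t s = k t s := fun t s => rfl
  have hUdist : ∀ n t t', |U (n + 1) t - U (n + 1) t'| ≤ Bf * dist (Kc t) (Kc t') := by
    intro n t t'
    rw [hUsucc n, hTapp, hTapp, ← integral_sub (hint2 t (U n)) (hint2 t' (U n))]
    have hb : ∀ s, ‖k t s * f (U n s) - k t' s * f (U n s)‖ ≤ dist (Kc t) (Kc t') * Bf := by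
      intro s
      rw [← sub_mul, Real.norm_eq_abs, abs_mul, abs_of_nonneg (hfnonneg _)]
      refine mul_le_mul ?_ (hfUBf n s) (hfnonneg _) dist_nonneg
      calc |k t s - k t' s| = dist (Kc t s) (Kc t' s) := by rw [Real.dist_eq, hKcapp, hKcapp]
        _ ≤ dist (Kc t) (Kc t') := ContinuousMap.dist_apply_le_dist s
    have := norm_integral_le_of_norm_le_const (μ := (volume : Measure unitInterval))
      (f := fun s => k t s * f (U n s) - k t' s * f (U n s))
      (C := dist (Kc t) (Kc t') * Bf) (Filter.Eventually.of_forall hb)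
    rw [Real.norm_eq_abs] at this
    simp only [measureReal_def, measure_univ, ENNReal.toReal_one, mul_one] at this
    linarith
  have hgdist : ∀ t t', |g t - g t'| ≤ Bf * dist (Kc t) (Kc t') := by
    intro t t'
    have h7 : Filter.Tendsto (fun n => |U (n + 1) t - U (n + 1) t'|) Filter.atTop
        (nhds (|g t - g t'|)) := by
      have ht1 : Filter.Tendsto (fun n => U (n + 1) t) Filter.atTop (nhds (g t)) :=
        (hlim t).comp (Filter.tendsto_add_atTop_nat 1)
      have ht2 : Filter.Tendsto (fun n => U (n + 1) t') Filter.atTop (nhds (g t')) :=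
        (hlim t').comp (Filter.tendsto_add_atTop_nat 1)
      exact (ht1.sub ht2).abs
    exact le_of_tendsto h7 (Filter.Eventually.of_forall fun n => hUdist n t t')
  have hgcont : Continuous g := by
    rw [Metric.continuous_iff]
    intro t ε hε
    have hKd : Filter.Tendsto (fun t' => dist (Kc t') (Kc t)) (nhds t) (nhds 0) := by
      have := (Kc.continuous.tendsto t).dist (tendsto_const_nhds (x := Kc t))
      simpa using this
    have hsmall : ∀ᶠ t' in nhds t, dist (Kc t') (Kc t) < ε / (2 * (Bf + 1)) := by
      refine hKd.eventually (eventually_lt_nhds ?_)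
      positivity
    rw [Metric.eventually_nhds_iff] at hsmall
    obtain ⟨δ', hδ'pos, hδ'⟩ := hsmall
    refine ⟨δ', hδ'pos, fun t' ht' => ?_⟩
    have h8 := hgdist t' t
    have h9 := hδ' ht'
    rw [Real.dist_eq]
    have h10 : Bf * dist (Kc t') (Kc t) ≤ Bf * (ε / (2 * (Bf + 1))) :=
      mul_le_mul_of_nonneg_left (le_of_lt h9) hBfnonneg
    have h11 : Bf * (ε / (2 * (Bf + 1))) < ε := by
      have hB1 : (0:ℝ) < 2 * (Bf + 1) := by linarith
      rw [mul_div_assoc', div_lt_iff₀ hB1]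
      nlinarith
    exact lt_of_le_of_lt (le_trans h8 h10) h11
  -- fixed point property
  have hfix : ∀ t, g t = ∫ s, k t s * f (g s) := by
    intro t
    have h12 : Filter.Tendsto (fun n => U (n + 1) t) Filter.atTop (nhds (g t)) :=
      (hlim t).comp (Filter.tendsto_add_atTop_nat 1)
    have h13 : Filter.Tendsto (fun n => ∫ s, k t s * f (U n s)) Filter.atTop
        (nhds (∫ s, k t s * f (g s))) := by
      refine tendsto_integral_of_dominated_convergence (fun _ => kmax * Bf)
        (fun n => (hint2 t (U n)).aestronglyMeasurable) (integrable_const _)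
        (fun n => Filter.Eventually.of_forall fun s => ?_)
        (Filter.Eventually.of_forall fun s => ?_)
      · rw [Real.norm_eq_abs, abs_mul, abs_of_nonneg (hfnonneg _)]
        exact mul_le_mul (hkle t s) (hfUBf n s) (hfnonneg _)
          (le_trans (abs_nonneg _) (hkle t s))
      · exact tendsto_const_nhds.mul ((hfcont.tendsto (g s)).comp (hlim s))
    have h14 : (fun n => U (n + 1) t) = fun n => ∫ s, k t s * f (U n s) := by
      funext n
      rw [hUsucc n, hTapp]
    rw [h14] at h12
    exact tendsto_nhds_unique h12 h13
  -- conclusion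
  refine ⟨r, R, hrpos, hRr, prop3, prop4, ⟨g, hgcont⟩, hg_nonneg, hfix, fun t => ⟨?_, ?_⟩⟩
  · exact le_trans (le_of_eq (hwt t).symm) (hg_lb t)
  · exact le_trans (hg_ub t) (le_of_eq (hu₀ t))
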